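/- Proposition 2 (ISS of deep GRUs): consider the deep GRU with M layers and suppose that for every layer i ∈ {1,…,M} it holds that ‖U_r^i‖_∞ · σ(‖[W_f^i U_f^i b_f^i]‖_∞) < 1. Fix λ̌^i ≥ 1 for each layer. Then the deep GRU is Input-to-State Stable: there exist a class-KL function β and class-K∞ functions γ_u, γ_b such that for every collection of layer biases b_r = (b_r^1,…,b_r^M), every initial state x̄ = (x̄^1,…,x̄^M) with ‖x̄^i‖_∞ ≤ λ̌^i for all i, every input sequence u with ‖u(t)‖_∞ ≤ 1 for all t, and every k ≥ 0, the concatenated state trajectory satisfies ‖x(k)‖_∞ ≤ β(‖x̄‖_∞, k) + γ_u(sup_t ‖u(t)‖_∞) + γ_b(‖b_r‖_∞). -/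

import Mathlib

open Real Filter

/-- The _root_.sigmoid activation function. -/
noncomputable def sigmoid (s : ℝ) : ℝ := 1 / (1 + Real.exp (-s))

/-- Induced infinity norm of a matrix (maximum absolute row sum). -/
noncomputable def matNorm {n m : ℕ} (A : Matrix (Fin n) (Fin m) ℝ) : ℝ :=
  ⨆ i, ∑ j, |A i j|

/-- Infinity norm of the horizontal concatenation `[A B c]`
(maximum absolute row sum of the concatenated matrix). -/
noncomputable def catNorm {n m p : ℕ} (A : Matrix (Fin n) (Fin m) ℝ)
    (B : Matrix (Fin n) (Fin p) ℝ) (c : Fin n → ℝ) : ℝ :=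
  ⨆ i, (∑ j, |A i j| + ∑ j, |B i j| + |c i|)

/-- One step of the single-layer GRU:
`x⁺ = z ∘ x + (1 - z) ∘ tanh(W_r u + U_r (f ∘ x) + b_r)`,
`z = σ(W_z u + U_z x + b_z)`, `f = σ(W_f u + U_f x + b_f)`. -/
noncomputable def gruStep {nu nx : ℕ}
    (Wz Wf Wr : Matrix (Fin nx) (Fin nu) ℝ)
    (Uz Uf Ur : Matrix (Fin nx) (Fin nx) ℝ)
    (bz bf br : Fin nx → ℝ)
    (u : Fin nu → ℝ) (x : Fin nx → ℝ) : Fin nx → ℝ :=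
  let z : Fin nx → ℝ := fun i => _root_.sigmoid ((Wz.mulVec u + Uz.mulVec x + bz) i)
  let f : Fin nx → ℝ := fun i => _root_.sigmoid ((Wf.mulVec u + Uf.mulVec x + bf) i)
  let r : Fin nx → ℝ := fun i => Real.tanh ((Wr.mulVec u + Ur.mulVec (f * x) + br) i)
  fun j => z j * x j + (1 - z j) * r j

/-- A function `γ : [0,∞) → [0,∞)` is of class K∞ if it is continuous,
strictly increasing, unbounded and `γ 0 = 0`. -/
def IsKInf (γ : ℝ → ℝ) : Prop :=
  ContinuousOn γ (Set.Ici 0) ∧ StrictMonoOn γ (Set.Ici 0) ∧ γ 0 = 0 ∧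
    ∀ M : ℝ, ∃ s, 0 ≤ s ∧ M < γ s

/-- A function `β : [0,∞) × ℕ → [0,∞)` is of class KL if `β (·, k)` is of class K∞
for each `k`, `β (s, ·)` is nonincreasing, and `β (s, k) → 0` as `k → ∞`. -/
def IsKL (β : ℝ → ℕ → ℝ) : Prop :=
  (∀ k : ℕ, IsKInf fun s => β s k) ∧
    (∀ s : ℝ, 0 ≤ s → ∀ k l : ℕ, k ≤ l → β s l ≤ β s k) ∧
    (∀ s : ℝ, 0 ≤ s → Filter.Tendsto (fun k : ℕ => β s k) Filter.atTop (nhds 0))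

/-- Input dimension of layer `i` of a deep GRU: the first layer is fed by the
external input (dimension `nu`), layer `i+1` is fed by the state of layer `i`. -/
def inDim (nu : ℕ) (n : ℕ → ℕ) : ℕ → ℕ
  | 0 => nu
  | i + 1 => n i

lemma sigmoid_pos (s : ℝ) : 0 < _root_.sigmoid s := by
  unfold _root_.sigmoid; positivity

lemma sigmoid_lt_one (s : ℝ) : _root_.sigmoid s < 1 := by
  unfold _root_.sigmoid
  rw [div_lt_one (by positivity)]
  linarith [Real.exp_pos (-s)]

lemma sigmoid_mono : Monotone _root_.sigmoid := by
  intro a b hab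
  unfold _root_.sigmoid
  apply one_div_le_one_div_of_le (by positivity)
  have := Real.exp_le_exp.2 (neg_le_neg hab)
  linarith

lemma sigmoid_continuous : Continuous _root_.sigmoid := by
  unfold _root_.sigmoid
  apply Continuous.div continuous_const
  · continuity
  · intro s; positivity

lemma abs_tanh_le_one (y : ℝ) : |Real.tanh y| ≤ 1 := by
  rw [Real.tanh_eq_sinh_div_cosh, abs_div, abs_of_pos (Real.cosh_pos y),
    div_le_one (Real.cosh_pos y)]
  nlinarith [Real.cosh_sq y, Real.cosh_pos y, abs_nonneg (Real.sinh y), sq_abs (Real.sinh y)]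

lemma sinh_le_mul_cosh {y : ℝ} (hy : 0 ≤ y) : Real.sinh y ≤ y * Real.cosh y := by
  have h : ∀ t ∈ Set.Ici (0:ℝ), 0 ≤ deriv (fun s => s * Real.cosh s - Real.sinh s) t := by
    intro t ht
    have : deriv (fun s => s * Real.cosh s - Real.sinh s) t = t * Real.sinh t := by
      have h1 : HasDerivAt (fun s : ℝ => s * Real.cosh s - Real.sinh s)
          (1 * Real.cosh t + t * Real.sinh t - Real.cosh t) t := by
        exact ((hasDerivAt_id t).mul (Real.hasDerivAt_cosh t)).sub (Real.hasDerivAt_sinh t)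
      rw [h1.deriv]; ring
    rw [this]
    exact mul_nonneg ht (by rwa [← Real.sinh_zero, Real.sinh_le_sinh])
  have hmono : MonotoneOn (fun s => s * Real.cosh s - Real.sinh s) (Set.Ici 0) := by
    apply monotoneOn_of_deriv_nonneg (convex_Ici 0)
    · exact (Continuous.sub (continuous_id.mul Real.continuous_cosh) Real.continuous_sinh).continuousOn
    · exact (Differentiable.sub (differentiable_id.mul Real.differentiable_cosh)
        Real.differentiable_sinh).differentiableOn
    · intro t ht
      exact h t (interior_subset ht)
  have := hmono (Set.self_mem_Ici) hy hy
  simp at this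
  linarith

lemma abs_tanh_le_abs (y : ℝ) : |Real.tanh y| ≤ |y| := by
  wlog hy : 0 ≤ y with H
  · push_neg at hy
    have := H (-y) (by linarith)
    rwa [Real.tanh_neg, abs_neg, abs_neg] at this
  rw [abs_of_nonneg hy, Real.tanh_eq_sinh_div_cosh, abs_div,
    abs_of_pos (Real.cosh_pos y), div_le_iff₀ (Real.cosh_pos y),
    abs_of_nonneg (by rwa [← Real.sinh_zero, Real.sinh_le_sinh])]
  exact sinh_le_mul_cosh hy

lemma matNorm_nonneg {n m : ℕ} (A : Matrix (Fin n) (Fin m) ℝ) : 0 ≤ matNorm A :=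
  Real.iSup_nonneg fun i => Finset.sum_nonneg fun j _ => abs_nonneg _

lemma row_le_matNorm {n m : ℕ} (A : Matrix (Fin n) (Fin m) ℝ) (i : Fin n) :
    ∑ j, |A i j| ≤ matNorm A :=
  le_ciSup (f := fun i => ∑ j, |A i j|) (Set.Finite.bddAbove (Set.finite_range _)) i

lemma catNorm_nonneg {n m p : ℕ} (A : Matrix (Fin n) (Fin m) ℝ)
    (B : Matrix (Fin n) (Fin p) ℝ) (c : Fin n → ℝ) : 0 ≤ catNorm A B c :=
  Real.iSup_nonneg fun i => by positivity

lemma row_le_catNorm {n m p : ℕ} (A : Matrix (Fin n) (Fin m) ℝ)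
    (B : Matrix (Fin n) (Fin p) ℝ) (c : Fin n → ℝ) (i : Fin n) :
    ∑ j, |A i j| + ∑ j, |B i j| + |c i| ≤ catNorm A B c :=
  le_ciSup (f := fun i => ∑ j, |A i j| + ∑ j, |B i j| + |c i|)
    (Set.Finite.bddAbove (Set.finite_range _)) i

lemma abs_le_norm {n : ℕ} (v : Fin n → ℝ) (i : Fin n) : |v i| ≤ ‖v‖ := by
  simpa [Real.norm_eq_abs] using norm_le_pi_norm v i

lemma abs_mulVec_le {n m : ℕ} (A : Matrix (Fin n) (Fin m) ℝ) (v : Fin m → ℝ) (i : Fin n) :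
    |A.mulVec v i| ≤ (∑ j, |A i j|) * ‖v‖ := by
  have : A.mulVec v i = ∑ j, A i j * v j := by simp [Matrix.mulVec, dotProduct]
  rw [this, Finset.sum_mul]
  refine (Finset.abs_sum_le_sum_abs _ _).trans (Finset.sum_le_sum fun j _ => ?_)
  rw [abs_mul]
  exact mul_le_mul_of_nonneg_left (abs_le_norm v j) (abs_nonneg _)

lemma sigmoid_arg_le {n m : ℕ} (W : Matrix (Fin n) (Fin m) ℝ)
    (U : Matrix (Fin n) (Fin n) ℝ) (b : Fin n → ℝ) (u : Fin m → ℝ) (x : Fin n → ℝ)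
    {M : ℝ} (hu : ‖u‖ ≤ M) (hx : ‖x‖ ≤ M) (hM : 1 ≤ M) (j : Fin n) :
    _root_.sigmoid ((W.mulVec u + U.mulVec x + b) j) ≤ _root_.sigmoid (catNorm W U b * M) := by
  apply sigmoid_mono
  have h1 : (W.mulVec u + U.mulVec x + b) j ≤
      (∑ l, |W j l|) * ‖u‖ + (∑ l, |U j l|) * ‖x‖ + |b j| := by
    have := (abs_mulVec_le W u j)
    have := (abs_mulVec_le U x j)
    have := le_abs_self (W.mulVec u j)
    have := le_abs_self (U.mulVec x j)
    have := le_abs_self (b j)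
    simp only [Pi.add_apply]
    nlinarith [abs_nonneg (W.mulVec u j), abs_nonneg (U.mulVec x j)]
  refine h1.trans ?_
  have hW : (0:ℝ) ≤ ∑ l, |W j l| := Finset.sum_nonneg fun _ _ => abs_nonneg _
  have hU : (0:ℝ) ≤ ∑ l, |U j l| := Finset.sum_nonneg fun _ _ => abs_nonneg _
  have hb : (0:ℝ) ≤ |b j| := abs_nonneg _
  have hun : (0:ℝ) ≤ ‖u‖ := norm_nonneg _
  have hxn : (0:ℝ) ≤ ‖x‖ := norm_nonneg _
  have h2 : (∑ l, |W j l|) * ‖u‖ + (∑ l, |U j l|) * ‖x‖ + |b j| ≤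
      (∑ l, |W j l| + ∑ l, |U j l| + |b j|) * M := by nlinarith
  exact h2.trans (mul_le_mul_of_nonneg_right (row_le_catNorm W U b j) (by linarith))

lemma gruStep_apply {nu nx : ℕ} (Wz Wf Wr : Matrix (Fin nx) (Fin nu) ℝ)
    (Uz Uf Ur : Matrix (Fin nx) (Fin nx) ℝ) (bz bf br : Fin nx → ℝ)
    (u : Fin nu → ℝ) (x : Fin nx → ℝ) (j : Fin nx) :
    gruStep Wz Wf Wr Uz Uf Ur bz bf br u x j =
      _root_.sigmoid ((Wz.mulVec u + Uz.mulVec x + bz) j) * x j +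
        (1 - _root_.sigmoid ((Wz.mulVec u + Uz.mulVec x + bz) j)) *
          Real.tanh ((Wr.mulVec u +
            Ur.mulVec ((fun i => _root_.sigmoid ((Wf.mulVec u + Uf.mulVec x + bf) i)) * x) + br) j) :=
  rfl

/-- Invariance: one GRU step keeps the state in `max ‖x‖ 1`. -/
lemma gruStep_norm_le_max {nu nx : ℕ} (Wz Wf Wr : Matrix (Fin nx) (Fin nu) ℝ)
    (Uz Uf Ur : Matrix (Fin nx) (Fin nx) ℝ) (bz bf br : Fin nx → ℝ)
    (u : Fin nu → ℝ) (x : Fin nx → ℝ) :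
    ‖gruStep Wz Wf Wr Uz Uf Ur bz bf br u x‖ ≤ max ‖x‖ 1 := by
  rw [pi_norm_le_iff_of_nonneg (le_trans zero_le_one (le_max_right _ _))]
  intro j
  rw [Real.norm_eq_abs, gruStep_apply]
  set z := _root_.sigmoid ((Wz.mulVec u + Uz.mulVec x + bz) j) with hz
  have hz0 : 0 < z := _root_.sigmoid_pos _
  have hz1 : z < 1 := _root_.sigmoid_lt_one _
  have hr := abs_tanh_le_one ((Wr.mulVec u +
    Ur.mulVec ((fun i => _root_.sigmoid ((Wf.mulVec u + Uf.mulVec x + bf) i)) * x) + br) j)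
  have hx := abs_le_norm x j
  have hx1 : |x j| ≤ max ‖x‖ 1 := hx.trans (le_max_left _ _)
  have h1 : (1:ℝ) ≤ max ‖x‖ 1 := le_max_right _ _
  set r := Real.tanh ((Wr.mulVec u +
    Ur.mulVec ((fun i => _root_.sigmoid ((Wf.mulVec u + Uf.mulVec x + bf) i)) * x) + br) j) with hrr
  calc |z * x j + (1 - z) * r|
      ≤ z * |x j| + (1 - z) * |r| := by
        refine (abs_add_le _ _).trans ?_
        rw [abs_mul, abs_mul, abs_of_pos hz0, abs_of_pos (by linarith : (0:ℝ) < 1 - z)]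
    _ ≤ z * max ‖x‖ 1 + (1 - z) * max ‖x‖ 1 := by
        have h2 := hr.trans h1
        nlinarith [abs_nonneg (x j), abs_nonneg r]
    _ = max ‖x‖ 1 := by ring

/-- Geometric approach of the state norm to the unit ball. -/
lemma gruStep_approach {nu nx : ℕ} (Wz Wf Wr : Matrix (Fin nx) (Fin nu) ℝ)
    (Uz Uf Ur : Matrix (Fin nx) (Fin nx) ℝ) (bz bf br : Fin nx → ℝ)
    (u : Fin nu → ℝ) (x : Fin nx → ℝ) {m : ℝ}
    (hu : ‖u‖ ≤ m) (hx : ‖x‖ ≤ m) (hm : 1 ≤ m) :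
    ‖gruStep Wz Wf Wr Uz Uf Ur bz bf br u x‖ ≤
      1 + _root_.sigmoid (catNorm Wz Uz bz * m) * max (‖x‖ - 1) 0 := by
  have hzb0 : 0 ≤ _root_.sigmoid (catNorm Wz Uz bz * m) := (_root_.sigmoid_pos _).le
  have hmx : 0 ≤ max (‖x‖ - 1) (0:ℝ) := le_max_right _ _
  rw [pi_norm_le_iff_of_nonneg (by positivity)]
  intro j
  rw [Real.norm_eq_abs, gruStep_apply]
  set z := _root_.sigmoid ((Wz.mulVec u + Uz.mulVec x + bz) j) with hzdef
  have hz0 : 0 < z := _root_.sigmoid_pos _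
  have hz1 : z < 1 := _root_.sigmoid_lt_one _
  have hzb : z ≤ _root_.sigmoid (catNorm Wz Uz bz * m) := sigmoid_arg_le Wz Uz bz u x hu hx hm j
  set r := Real.tanh ((Wr.mulVec u +
    Ur.mulVec ((fun i => _root_.sigmoid ((Wf.mulVec u + Uf.mulVec x + bf) i)) * x) + br) j) with hrr
  have hr : |r| ≤ 1 := abs_tanh_le_one _
  have hxj : |x j| ≤ ‖x‖ := abs_le_norm x j
  have step1 : |z * x j + (1 - z) * r| ≤ z * |x j| + (1 - z) * |r| := by
    refine (abs_add_le _ _).trans ?_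
    rw [abs_mul, abs_mul, abs_of_pos hz0, abs_of_pos (by linarith : (0:ℝ) < 1 - z)]
  refine step1.trans ?_
  have k2 : (1 - z) * |r| ≤ (1 - z) * 1 := mul_le_mul_of_nonneg_left hr (by linarith)
  have step2 : z * |x j| + (1 - z) * |r| ≤ 1 + z * (|x j| - 1) := by
    have : z * |x j| + (1 - z) * 1 = 1 + z * (|x j| - 1) := by ring
    linarith
  refine step2.trans ?_
  have : z * (|x j| - 1) ≤ _root_.sigmoid (catNorm Wz Uz bz * m) * max (‖x‖ - 1) 0 := by
    rcases le_or_gt (|x j|) 1 with h | h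
    · have : z * (|x j| - 1) ≤ 0 := mul_nonpos_of_nonneg_of_nonpos hz0.le (by linarith)
      exact this.trans (by positivity)
    · have h1 : z * (|x j| - 1) ≤ _root_.sigmoid (catNorm Wz Uz bz * m) * (|x j| - 1) :=
        mul_le_mul_of_nonneg_right hzb (by linarith)
      refine h1.trans (mul_le_mul_of_nonneg_left ?_ hzb0)
      exact le_max_of_le_left (by linarith)
  linarith

/-- Contraction with input and bias gains, valid on the region `‖x‖, ‖u‖ ≤ m`. -/
lemma gruStep_contract {nu nx : ℕ} (Wz Wf Wr : Matrix (Fin nx) (Fin nu) ℝ)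
    (Uz Uf Ur : Matrix (Fin nx) (Fin nx) ℝ) (bz bf br : Fin nx → ℝ)
    (u : Fin nu → ℝ) (x : Fin nx → ℝ) {m : ℝ}
    (hu : ‖u‖ ≤ m) (hx : ‖x‖ ≤ m) (hm : 1 ≤ m)
    (hμ : matNorm Ur * _root_.sigmoid (catNorm Wf Uf bf * m) ≤ 1) :
    ‖gruStep Wz Wf Wr Uz Uf Ur bz bf br u x‖ ≤
      (matNorm Ur * _root_.sigmoid (catNorm Wf Uf bf * m) +
        _root_.sigmoid (catNorm Wz Uz bz * m) * (1 - matNorm Ur * _root_.sigmoid (catNorm Wf Uf bf * m)))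
        * ‖x‖ + (matNorm Wr * ‖u‖ + ‖br‖) := by
  set φ := _root_.sigmoid (catNorm Wf Uf bf * m) with hφdef
  set μ := matNorm Ur * φ with hμdef
  set ζ := _root_.sigmoid (catNorm Wz Uz bz * m) with hζdef
  have hφ0 : 0 < φ := _root_.sigmoid_pos _
  have hζ0 : 0 < ζ := _root_.sigmoid_pos _
  have hζ1 : ζ < 1 := _root_.sigmoid_lt_one _
  have hμ0 : 0 ≤ μ := mul_nonneg (matNorm_nonneg _) hφ0.le
  have hxn : (0:ℝ) ≤ ‖x‖ := norm_nonneg _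
  have hun : (0:ℝ) ≤ ‖u‖ := norm_nonneg _
  have hWr0 : 0 ≤ matNorm Wr := matNorm_nonneg _
  have hbrn : (0:ℝ) ≤ ‖br‖ := norm_nonneg _
  have hcoef : 0 ≤ μ + ζ * (1 - μ) := by nlinarith
  have hgain0 : 0 ≤ matNorm Wr * ‖u‖ + ‖br‖ := add_nonneg (mul_nonneg hWr0 hun) hbrn
  rw [pi_norm_le_iff_of_nonneg (add_nonneg (mul_nonneg hcoef hxn) hgain0)]
  intro j
  rw [Real.norm_eq_abs, gruStep_apply]
  set f : Fin nx → ℝ := fun i => _root_.sigmoid ((Wf.mulVec u + Uf.mulVec x + bf) i) with hfdef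
  set z := _root_.sigmoid ((Wz.mulVec u + Uz.mulVec x + bz) j) with hzdef
  have hz0 : 0 < z := _root_.sigmoid_pos _
  have hz1 : z < 1 := _root_.sigmoid_lt_one _
  have hzb : z ≤ ζ := sigmoid_arg_le Wz Uz bz u x hu hx hm j
  -- bound on f * x
  have hfx : ‖f * x‖ ≤ φ * ‖x‖ := by
    rw [pi_norm_le_iff_of_nonneg (mul_nonneg hφ0.le hxn)]
    intro l
    rw [Real.norm_eq_abs, Pi.mul_apply, abs_mul]
    have hfl0 : 0 < f l := _root_.sigmoid_pos _
    have hfl : f l ≤ φ := sigmoid_arg_le Wf Uf bf u x hu hx hm l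
    have := abs_le_norm x l
    rw [abs_of_pos hfl0]
    nlinarith
  -- bound on tanh argument
  set r := Real.tanh ((Wr.mulVec u + Ur.mulVec (f * x) + br) j) with hrr
  have hr : |r| ≤ matNorm Wr * ‖u‖ + μ * ‖x‖ + ‖br‖ := by
    refine (abs_tanh_le_abs _).trans ?_
    have h1 : |(Wr.mulVec u + Ur.mulVec (f * x) + br) j| ≤
        |Wr.mulVec u j| + |Ur.mulVec (f * x) j| + |br j| := by
      simp only [Pi.add_apply]
      exact (abs_add_le _ _).trans (by gcongr; exact abs_add_le _ _)
    refine h1.trans ?_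
    have h2 : |Wr.mulVec u j| ≤ matNorm Wr * ‖u‖ :=
      (abs_mulVec_le Wr u j).trans (mul_le_mul_of_nonneg_right (row_le_matNorm Wr j) hun)
    have h3 : |Ur.mulVec (f * x) j| ≤ μ * ‖x‖ := by
      have h6 : (∑ l, |Ur j l|) * ‖f * x‖ ≤ (∑ l, |Ur j l|) * (φ * ‖x‖) :=
        mul_le_mul_of_nonneg_left hfx (Finset.sum_nonneg fun l _ => abs_nonneg (Ur j l))
      have h4 : (∑ l, |Ur j l|) * (φ * ‖x‖) ≤ matNorm Ur * (φ * ‖x‖) :=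
        mul_le_mul_of_nonneg_right (row_le_matNorm Ur j) (mul_nonneg hφ0.le hxn)
      have h7 : μ * ‖x‖ = matNorm Ur * (φ * ‖x‖) := by rw [hμdef]; ring
      rw [h7]
      exact (abs_mulVec_le Ur (f * x) j).trans (h6.trans h4)
    have h5 : |br j| ≤ ‖br‖ := abs_le_norm br j
    linarith
  have hxj : |x j| ≤ ‖x‖ := abs_le_norm x j
  have step1 : |z * x j + (1 - z) * r| ≤ z * |x j| + (1 - z) * |r| := by
    refine (abs_add_le _ _).trans ?_
    rw [abs_mul, abs_mul, abs_of_pos hz0, abs_of_pos (by linarith : (0:ℝ) < 1 - z)]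
  refine step1.trans ?_
  have k1 : z * |x j| ≤ z * ‖x‖ := mul_le_mul_of_nonneg_left hxj hz0.le
  have k2 : (1 - z) * |r| ≤ (1 - z) * (matNorm Wr * ‖u‖ + μ * ‖x‖ + ‖br‖) :=
    mul_le_mul_of_nonneg_left hr (by linarith)
  have k3 : z * ‖x‖ + (1 - z) * (matNorm Wr * ‖u‖ + μ * ‖x‖ + ‖br‖) =
      (μ + z * (1 - μ)) * ‖x‖ + (1 - z) * (matNorm Wr * ‖u‖ + ‖br‖) := by ring
  have k4 : μ + z * (1 - μ) ≤ μ + ζ * (1 - μ) := by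
    have := mul_le_mul_of_nonneg_right hzb (by linarith : (0:ℝ) ≤ 1 - μ)
    linarith
  have k5 : (μ + z * (1 - μ)) * ‖x‖ ≤ (μ + ζ * (1 - μ)) * ‖x‖ :=
    mul_le_mul_of_nonneg_right k4 hxn
  have k6 : (1 - z) * (matNorm Wr * ‖u‖ + ‖br‖) ≤ 1 * (matNorm Wr * ‖u‖ + ‖br‖) :=
    mul_le_mul_of_nonneg_right (by linarith) hgain0
  linarith
lemma isKInf_linear {G : ℝ} (hG : 0 < G) : IsKInf (fun r => G * r) := by
  refine ⟨(continuous_const.mul continuous_id).continuousOn, ?_, mul_zero G, ?_⟩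
  · intro a _ b _ hab
    exact mul_lt_mul_of_pos_left hab hG
  · intro M
    refine ⟨(|M| + 1) / G, by positivity, ?_⟩
    show M < G * ((|M| + 1) / G)
    rw [mul_div_cancel₀ _ hG.ne']
    calc M ≤ |M| := le_abs_self M
      _ < |M| + 1 := by linarith

lemma isKL_exp {B ρ : ℝ} (hB : 0 < B) (hρ0 : 0 < ρ) (hρ1 : ρ < 1) :
    IsKL (fun s k => B * ρ ^ k * s) := by
  refine ⟨fun k => isKInf_linear (by positivity), ?_, ?_⟩
  · intro s hs k l hkl
    have : ρ ^ l ≤ ρ ^ k := pow_le_pow_of_le_one hρ0.le hρ1.le hkl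
    show B * ρ ^ l * s ≤ B * ρ ^ k * s
    have hBs : 0 ≤ B * s := by positivity
    nlinarith
  · intro s hs
    have h1 : Filter.Tendsto (fun k : ℕ => ρ ^ k) Filter.atTop (nhds 0) :=
      tendsto_pow_atTop_nhds_zero_of_lt_one hρ0.le hρ1
    have h2 := (h1.const_mul B).mul_const s
    simpa using h2

set_option maxHeartbeats 1000000 in
/-- **Proposition 2 (ISS of deep GRUs).**
If every layer satisfies `‖U_r^i‖_∞ σ(‖[W_f^i U_f^i b_f^i]‖_∞) < 1`, then the deep GRU
is Input-to-State Stable: `‖x(k)‖_∞ ≤ β(‖x̄‖_∞, k) + γ_u(sup_t ‖u(t)‖_∞) + γ_b(‖b_r‖_∞)`,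
where the norms of the concatenated state, initial state, and biases are the maxima
over the layers. -/
theorem deep_gru_ISS {nu M : ℕ} {n : ℕ → ℕ}
    (Wz Wf Wr : ∀ i : ℕ, Matrix (Fin (n i)) (Fin (inDim nu n i)) ℝ)
    (Uz Uf Ur : ∀ i : ℕ, Matrix (Fin (n i)) (Fin (n i)) ℝ)
    (bz bf : ∀ i : ℕ, Fin (n i) → ℝ)
    (lam : ℕ → ℝ) (hlam : ∀ i < M, 1 ≤ lam i)
    (hcond : ∀ i < M, matNorm (Ur i) * _root_.sigmoid (catNorm (Wf i) (Uf i) (bf i)) < 1) :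
    ∃ β : ℝ → ℕ → ℝ, ∃ γu γb : ℝ → ℝ, IsKL β ∧ IsKInf γu ∧ IsKInf γb ∧
      ∀ br : ∀ i : ℕ, Fin (n i) → ℝ,
        ∀ xbar : ∀ i : ℕ, Fin (n i) → ℝ, (∀ i < M, ‖xbar i‖ ≤ lam i) →
          ∀ u : ℕ → Fin nu → ℝ, (∀ t, ‖u t‖ ≤ 1) →
            ∀ x : ℕ → ∀ i : ℕ, Fin (n i) → ℝ, x 0 = xbar →
              (∀ k, 0 < M → x (k + 1) 0 =
                gruStep (Wz 0) (Wf 0) (Wr 0) (Uz 0) (Uf 0) (Ur 0) (bz 0) (bf 0) (br 0)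
                  (u k) (x k 0)) →
              (∀ k, ∀ i : ℕ, i + 1 < M → x (k + 1) (i + 1) =
                gruStep (Wz (i + 1)) (Wf (i + 1)) (Wr (i + 1)) (Uz (i + 1)) (Uf (i + 1))
                  (Ur (i + 1)) (bz (i + 1)) (bf (i + 1)) (br (i + 1))
                  (x (k + 1) i) (x k (i + 1))) →
              ∀ k : ℕ, (⨆ i : Fin M, ‖x k (i : ℕ)‖) ≤
                β (⨆ i : Fin M, ‖xbar (i : ℕ)‖) k + γu (⨆ t, ‖u t‖) +
                  γb (⨆ i : Fin M, ‖br (i : ℕ)‖) := by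
  rcases Nat.eq_zero_or_pos M with hM0 | hM
  · -- trivial case `M = 0`
    subst hM0
    refine ⟨fun s k => 1 * (1/2 : ℝ) ^ k * s, fun r => 1 * r, fun r => 1 * r,
      isKL_exp one_pos (by norm_num) (by norm_num), isKInf_linear one_pos,
      isKInf_linear one_pos, ?_⟩
    intro br xbar hxbar u hu x hx0 h0 hS k
    have h1 : (⨆ i : Fin 0, ‖x k (i : ℕ)‖) = 0 := Real.iSup_of_isEmpty _
    have h2 : (⨆ i : Fin 0, ‖xbar (i : ℕ)‖) = 0 := Real.iSup_of_isEmpty _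
    have h3 : (⨆ i : Fin 0, ‖br (i : ℕ)‖) = 0 := Real.iSup_of_isEmpty _
    have h4 : (0:ℝ) ≤ ⨆ t, ‖u t‖ :=
      Real.iSup_nonneg fun t => norm_nonneg _
    rw [h1, h2, h3]
    simp only [mul_zero]
    linarith
  -- main case `0 < M`
  have hNe : (Finset.range M).Nonempty := ⟨0, Finset.mem_range.2 hM⟩
  set Λ : ℝ := max 1 ((Finset.range M).sup' hNe lam) with hΛdef
  have hΛ1 : (1:ℝ) ≤ Λ := le_max_left _ _
  have hlamΛ : ∀ i < M, lam i ≤ Λ := fun i hi =>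
    le_max_of_le_right (Finset.le_sup' lam (Finset.mem_range.2 hi))
  -- choose ε > 0 keeping the contraction condition with margin
  have hexists : ∀ i : ℕ, ∃ e : ℝ, 0 < e ∧ (i < M →
      matNorm (Ur i) * _root_.sigmoid (catNorm (Wf i) (Uf i) (bf i) * (1 + e)) < 1) := by
    intro i
    by_cases hi : i < M
    · have hc : Continuous fun t : ℝ =>
          matNorm (Ur i) * _root_.sigmoid (catNorm (Wf i) (Uf i) (bf i) * (1 + t)) :=
        continuous_const.mul (sigmoid_continuous.comp
          (continuous_const.mul (continuous_const.add continuous_id)))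
      have h0 : matNorm (Ur i) * _root_.sigmoid (catNorm (Wf i) (Uf i) (bf i) * (1 + 0)) < 1 := by
        simpa using hcond i hi
      have hev : ∀ᶠ t in nhds (0:ℝ),
          matNorm (Ur i) * _root_.sigmoid (catNorm (Wf i) (Uf i) (bf i) * (1 + t)) < 1 :=
        (hc.continuousAt (x := 0)).eventually_lt continuousAt_const h0
      rcases Metric.eventually_nhds_iff.1 hev with ⟨δ, hδ0, hδ⟩
      refine ⟨δ/2, by linarith, fun _ => hδ ?_⟩
      simp only [Real.dist_eq, sub_zero]
      rw [abs_of_pos (by linarith)]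
      linarith
    · exact ⟨1, one_pos, fun h => absurd h hi⟩
  choose eps heps0 hepslt using hexists
  set ε : ℝ := (Finset.range M).inf' hNe eps with hεdef
  have hε0 : 0 < ε := (Finset.lt_inf'_iff _).2 fun i _ => heps0 i
  have hεi : ∀ i < M, matNorm (Ur i) * _root_.sigmoid (catNorm (Wf i) (Uf i) (bf i) * (1 + ε)) < 1 := by
    intro i hi
    refine lt_of_le_of_lt ?_ (hepslt i hi)
    apply mul_le_mul_of_nonneg_left _ (matNorm_nonneg _)
    apply sigmoid_mono
    apply mul_le_mul_of_nonneg_left _ (catNorm_nonneg _ _ _)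
    have := Finset.inf'_le eps (Finset.mem_range.2 hi)
    linarith
  set Λ' : ℝ := Λ + ε with hΛ'def
  have hΛ'1 : (1:ℝ) ≤ Λ' := by linarith
  have hΛΛ' : Λ ≤ Λ' := by linarith
  have hεΛ' : 1 + ε ≤ Λ' := by linarith
  -- uniform bound on the update gates
  set zb : ℝ := (Finset.range M).sup' hNe
    (fun i => _root_.sigmoid (catNorm (Wz i) (Uz i) (bz i) * Λ')) with hzbdef
  have hzb0 : 0 < zb := by
    rw [hzbdef]
    exact lt_of_lt_of_le (_root_.sigmoid_pos _)
      (Finset.le_sup' (fun i => _root_.sigmoid (catNorm (Wz i) (Uz i) (bz i) * Λ'))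
        (Finset.mem_range.2 hM))
  have hzb1 : zb < 1 := by
    rw [hzbdef]
    exact (Finset.sup'_lt_iff _).2 fun i _ => _root_.sigmoid_lt_one _
  have hzbi : ∀ i < M, _root_.sigmoid (catNorm (Wz i) (Uz i) (bz i) * Λ') ≤ zb := by
    intro i hi
    rw [hzbdef]
    exact Finset.le_sup' (fun i => _root_.sigmoid (catNorm (Wz i) (Uz i) (bz i) * Λ'))
      (Finset.mem_range.2 hi)
  -- contraction constants
  set μ : ℕ → ℝ := fun i => matNorm (Ur i) * _root_.sigmoid (catNorm (Wf i) (Uf i) (bf i) * (1 + ε))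
    with hμdef
  have hμ0 : ∀ i, 0 ≤ μ i := fun i => mul_nonneg (matNorm_nonneg _) (_root_.sigmoid_pos _).le
  set c : ℝ := (Finset.range M).sup' hNe (fun i => μ i + zb * (1 - μ i)) with hcdef
  have hc1 : c < 1 := by
    rw [hcdef]
    refine (Finset.sup'_lt_iff _).2 fun i hi => ?_
    have h1 : μ i < 1 := hεi i (Finset.mem_range.1 hi)
    have h2 := hμ0 i
    nlinarith
  have hzc : zb ≤ c := by
    rw [hcdef]
    refine le_trans ?_ (Finset.le_sup' (fun i => μ i + zb * (1 - μ i)) (Finset.mem_range.2 hM))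
    have h1 := hμ0 0
    nlinarith
  have hc0 : 0 < c := lt_of_lt_of_le hzb0 hzc
  have hci : ∀ i < M, μ i + zb * (1 - μ i) ≤ c := by
    intro i hi
    rw [hcdef]
    exact Finset.le_sup' (fun i => μ i + zb * (1 - μ i)) (Finset.mem_range.2 hi)
  set ρ : ℝ := (1 + c) / 2 with hρdef
  have hcρ : c < ρ := by rw [hρdef]; linarith
  have hρ1 : ρ < 1 := by rw [hρdef]; linarith
  have hρ0 : 0 < ρ := hc0.trans hcρ
  -- input gains
  set w : ℝ := (Finset.range M).sup' hNe (fun i => matNorm (Wr i)) with hwdef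
  have hw0 : 0 ≤ w := by
    rw [hwdef]
    exact le_trans (matNorm_nonneg (Wr 0))
      (Finset.le_sup' (fun i => matNorm (Wr i)) (Finset.mem_range.2 hM))
  have hwi : ∀ i < M, matNorm (Wr i) ≤ w := by
    intro i hi
    rw [hwdef]
    exact Finset.le_sup' (fun i => matNorm (Wr i)) (Finset.mem_range.2 hi)
  -- time K after which the state is within 1 + ε of the unit ball
  obtain ⟨K, hK⟩ : ∃ K : ℕ, zb ^ K * Λ ≤ ε := by
    obtain ⟨K, hK⟩ := exists_pow_lt_of_lt_one (div_pos hε0 (by linarith : (0:ℝ) < Λ)) hzb1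
    exact ⟨K, by rw [← le_div_iff₀ (by linarith : (0:ℝ) < Λ)] at *; exact hK.le⟩
  -- cascade constants
  set q : ℝ := max 1 (w * ρ / (ρ - c)) with hqdef
  have hq1 : (1:ℝ) ≤ q := le_max_left _ _
  have hqw : w * ρ ≤ q * (ρ - c) := by
    have h1 : w * ρ / (ρ - c) ≤ q := le_max_right _ _
    rw [div_le_iff₀ (by linarith : (0:ℝ) < ρ - c)] at h1
    linarith
  set D : ℕ → ℝ := fun i => q ^ i with hDdef
  have hD1 : ∀ i, (1:ℝ) ≤ D i := fun i => one_le_pow₀ hq1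
  have hD0 : ∀ i, (0:ℝ) ≤ D i := fun i => le_trans zero_le_one (hD1 i)
  set Γ : ℕ → ℝ := fun i => Nat.rec ((w + 1) / (1 - c)) (fun _ g => (w * g + 1) / (1 - c)) i
    with hΓdef
  have hΓ0 : Γ 0 = (w + 1) / (1 - c) := rfl
  have hΓs : ∀ i, Γ (i + 1) = (w * Γ i + 1) / (1 - c) := fun i => rfl
  have hΓpos : ∀ i, 0 < Γ i := by
    intro i
    induction i with
    | zero => rw [hΓ0]; exact div_pos (by linarith) (by linarith)
    | succ i ih =>
      rw [hΓs]
      exact div_pos (by nlinarith [mul_nonneg hw0 ih.le]) (by linarith)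
  set Dstar : ℝ := q ^ M with hDstardef
  have hDstar : ∀ i < M, D i ≤ Dstar := fun i hi => pow_le_pow_right₀ hq1 hi.le
  have hDstar1 : (1:ℝ) ≤ Dstar := one_le_pow₀ hq1
  set Γstar : ℝ := (Finset.range M).sup' hNe Γ with hΓstardef
  have hΓstar : ∀ i < M, Γ i ≤ Γstar := by
    intro i hi
    rw [hΓstardef]
    exact Finset.le_sup' Γ (Finset.mem_range.2 hi)
  have hΓstar0 : 0 < Γstar := lt_of_lt_of_le (hΓpos 0) (hΓstar 0 hM)
  -- the final comparison functions
  have hρK : (0:ℝ) < ρ ^ K := pow_pos hρ0 K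
  set B : ℝ := max ((1 + ε) * Dstar) Λ / ρ ^ K with hBdef
  have hB0 : 0 < B := by
    apply div_pos _ hρK
    exact lt_of_lt_of_le (by linarith : (0:ℝ) < Λ) (le_max_right _ _)
  have hBD : Dstar ≤ B := by
    rw [hBdef, le_div_iff₀ hρK]
    have h1 : ρ ^ K ≤ 1 := pow_le_one₀ hρ0.le hρ1.le
    have h2 : (1 + ε) * Dstar ≤ max ((1 + ε) * Dstar) Λ := le_max_left _ _
    nlinarith
  set G : ℝ := Γstar + 1 with hGdef
  have hG0 : 0 < G := by positivity
  have hΓG : Γstar ≤ G := by rw [hGdef]; linarith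
  have hD00 : D 0 = 1 := pow_zero q
  have hDsucc : ∀ i, D (i+1) = D i * q := fun i => pow_succ q i
  have hc1c : (1:ℝ) - c ≠ 0 := by intro h; rw [sub_eq_zero] at h; exact absurd h.symm hc1.ne
  have hΓ0inv : Γ 0 * (1 - c) = w + 1 := by rw [hΓ0]; exact div_mul_cancel₀ _ hc1c
  have hΓsinv : ∀ i, Γ (i+1) * (1 - c) = w * Γ i + 1 := fun i => by
    rw [hΓs]; exact div_mul_cancel₀ _ hc1c
  have hBK : B * ρ ^ K = max ((1 + ε) * Dstar) Λ := div_mul_cancel₀ _ hρK.ne'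
  have hμval : ∀ j, μ j = matNorm (Ur j) * _root_.sigmoid (catNorm (Wf j) (Uf j) (bf j) * (1 + ε)) :=
    fun j => rfl
  clear_value Λ ε Λ' zb μ c ρ w q D Γ Dstar Γstar B G
  refine ⟨fun s k => B * ρ ^ k * s, fun r => G * r, fun r => G * r,
    isKL_exp hB0 hρ0 hρ1, isKInf_linear hG0, isKInf_linear hG0, ?_⟩
  intro br xbar hxbar u hu x hx0 hstep0 hstepS k
  -- suprema of the data
  set su : ℝ := ⨆ t, ‖u t‖ with hsudef
  have hsubdd : BddAbove (Set.range fun t => ‖u t‖) := ⟨1, by rintro r ⟨t, rfl⟩; exact hu t⟩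
  have hsut : ∀ t, ‖u t‖ ≤ su := fun t => le_ciSup hsubdd t
  have hsu0 : 0 ≤ su := le_trans (norm_nonneg _) (hsut 0)
  set s : ℝ := ⨆ i : Fin M, ‖xbar (i : ℕ)‖ with hsdef
  have hsi : ∀ i < M, ‖xbar i‖ ≤ s := fun i hi =>
    le_ciSup (f := fun j : Fin M => ‖xbar (j : ℕ)‖)
      (Set.Finite.bddAbove (Set.finite_range _)) (⟨i, hi⟩ : Fin M)
  have hs0 : 0 ≤ s := le_trans (norm_nonneg _) (hsi 0 hM)
  set sb : ℝ := ⨆ i : Fin M, ‖br (i : ℕ)‖ with hsbdef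
  have hsbi : ∀ i < M, ‖br i‖ ≤ sb := fun i hi =>
    le_ciSup (f := fun j : Fin M => ‖br (j : ℕ)‖)
      (Set.Finite.bddAbove (Set.finite_range _)) (⟨i, hi⟩ : Fin M)
  have hsb0 : 0 ≤ sb := le_trans (norm_nonneg _) (hsbi 0 hM)
  set S : ℝ := su + sb with hSdef
  have hS0 : 0 ≤ S := add_nonneg hsu0 hsb0
  have hsuS : su ≤ S := by rw [hSdef]; linarith
  have hsbS : sb ≤ S := by rw [hSdef]; linarith
  -- invariance of the per-layer balls
  have hinv : ∀ k, ∀ i < M, ‖x k i‖ ≤ max (‖xbar i‖) 1 := by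
    intro k
    induction k with
    | zero => intro i _; rw [hx0]; exact le_max_left _ _
    | succ k ih =>
      intro i hi
      cases i with
      | zero =>
        rw [hstep0 k hM]
        exact (gruStep_norm_le_max _ _ _ _ _ _ _ _ _ _ _).trans
          (max_le (ih 0 hi) (le_max_right _ _))
      | succ i =>
        rw [hstepS k i hi]
        exact (gruStep_norm_le_max _ _ _ _ _ _ _ _ _ _ _).trans
          (max_le (ih (i+1) hi) (le_max_right _ _))
  have hinvΛ : ∀ k, ∀ i < M, ‖x k i‖ ≤ Λ := fun k i hi =>
    (hinv k i hi).trans (max_le ((hxbar i hi).trans (hlamΛ i hi)) hΛ1)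
  -- phase 1: geometric approach to the unit ball
  have hph1 : ∀ k, ∀ i < M, ‖x k i‖ ≤ 1 + zb ^ k * (Λ - 1) := by
    intro k
    induction k with
    | zero =>
      intro i hi
      rw [hx0, pow_zero, one_mul]
      have := (hxbar i hi).trans (hlamΛ i hi)
      linarith
    | succ k ih =>
      intro i hi
      have hEk : 0 ≤ zb ^ k * (Λ - 1) := mul_nonneg (pow_nonneg hzb0.le k) (by linarith)
      have hup : ‖x (k+1) i‖ ≤
          1 + _root_.sigmoid (catNorm (Wz i) (Uz i) (bz i) * Λ') * max (‖x k i‖ - 1) 0 := by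
        cases i with
        | zero =>
          rw [hstep0 k hM]
          exact gruStep_approach _ _ _ _ _ _ _ _ _ _ _
            ((hu k).trans hΛ'1) ((hinvΛ k 0 hi).trans hΛΛ') hΛ'1
        | succ i =>
          rw [hstepS k i hi]
          exact gruStep_approach _ _ _ _ _ _ _ _ _ _ _
            ((hinvΛ (k+1) i (Nat.lt_of_succ_lt hi)).trans hΛΛ')
            ((hinvΛ k (i+1) hi).trans hΛΛ') hΛ'1
      refine hup.trans ?_
      have h1 : max (‖x k i‖ - 1) 0 ≤ zb ^ k * (Λ - 1) :=
        max_le (by have := ih i hi; linarith) hEk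
      have h2 : _root_.sigmoid (catNorm (Wz i) (Uz i) (bz i) * Λ') * max (‖x k i‖ - 1) 0 ≤
          zb * (zb ^ k * (Λ - 1)) :=
        mul_le_mul (hzbi i hi) h1 (le_max_right _ _) hzb0.le
      have h3 : zb * (zb ^ k * (Λ - 1)) = zb ^ (k+1) * (Λ - 1) := by rw [pow_succ]; ring
      linarith
  -- one-step contraction estimate, valid in the (1+ε)-region
  have hstepC : ∀ i < M, ∀ (uu : Fin (inDim nu n i) → ℝ) (xx : Fin (n i) → ℝ),
      ‖uu‖ ≤ 1 + ε → ‖xx‖ ≤ 1 + ε →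
      ‖gruStep (Wz i) (Wf i) (Wr i) (Uz i) (Uf i) (Ur i) (bz i) (bf i) (br i) uu xx‖ ≤
        c * ‖xx‖ + (w * ‖uu‖ + sb) := by
    intro i hi uu xx huu hxx
    have hμle : μ i ≤ 1 := by rw [hμval i]; exact (hεi i hi).le
    have h1 : ‖gruStep (Wz i) (Wf i) (Wr i) (Uz i) (Uf i) (Ur i) (bz i) (bf i) (br i) uu xx‖ ≤
        (μ i + _root_.sigmoid (catNorm (Wz i) (Uz i) (bz i) * (1 + ε)) * (1 - μ i)) * ‖xx‖ +
          (matNorm (Wr i) * ‖uu‖ + ‖br i‖) := by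
      rw [hμval i]
      exact gruStep_contract (Wz i) (Wf i) (Wr i) (Uz i) (Uf i) (Ur i) (bz i) (bf i) (br i)
        uu xx huu hxx (by linarith) (by rw [← hμval i]; exact hμle)
    refine h1.trans ?_
    have hζ : _root_.sigmoid (catNorm (Wz i) (Uz i) (bz i) * (1 + ε)) ≤ zb :=
      le_trans (sigmoid_mono (mul_le_mul_of_nonneg_left hεΛ' (catNorm_nonneg _ _ _)))
        (hzbi i hi)
    have hco : μ i + _root_.sigmoid (catNorm (Wz i) (Uz i) (bz i) * (1 + ε)) * (1 - μ i) ≤ c := by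
      have h2 := hci i hi
      have h9 : 0 ≤ (zb - _root_.sigmoid (catNorm (Wz i) (Uz i) (bz i) * (1 + ε))) * (1 - μ i) :=
        mul_nonneg (by linarith) (by linarith)
      linarith [h9, h2]
    have h3 : (μ i + _root_.sigmoid (catNorm (Wz i) (Uz i) (bz i) * (1 + ε)) * (1 - μ i)) * ‖xx‖ ≤
        c * ‖xx‖ := mul_le_mul_of_nonneg_right hco (norm_nonneg _)
    have h4 : matNorm (Wr i) * ‖uu‖ ≤ w * ‖uu‖ :=
      mul_le_mul_of_nonneg_right (hwi i hi) (norm_nonneg _)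
    have h5 : ‖br i‖ ≤ sb := hsbi i hi
    linarith
  -- the cascade estimate
  have hcas : ∀ (K0 : ℕ) (θ : ℝ), 0 ≤ θ →
      (∀ k, K0 ≤ k → ∀ i < M, ‖x k i‖ ≤ 1 + ε) →
      (∀ i < M, ‖x K0 i‖ ≤ θ) →
      ∀ i, i < M → ∀ t, ‖x (K0 + t) i‖ ≤ θ * D i * ρ ^ t + Γ i * S := by
    intro K0 θ hθ0 hreg hbase i
    induction i with
    | zero =>
      intro hi t
      induction t with
      | zero =>
        rw [Nat.add_zero, hD00, pow_zero]
        have h1 := hbase 0 hi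
        have h2 : 0 ≤ Γ 0 * S := mul_nonneg (hΓpos 0).le hS0
        linarith
      | succ t iht =>
        have heq : K0 + (t+1) = (K0 + t) + 1 := by omega
        rw [heq, hstep0 (K0 + t) hM]
        have h2 := hstepC 0 hM (u (K0 + t)) (x (K0 + t) 0)
          ((hu (K0 + t)).trans (by linarith)) (hreg (K0 + t) (Nat.le_add_right _ _) 0 hM)
        refine h2.trans ?_
        have h3 : c * ‖x (K0 + t) 0‖ ≤ c * (θ * D 0 * ρ ^ t + Γ 0 * S) :=
          mul_le_mul_of_nonneg_left iht hc0.le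
        have h4 : w * ‖u (K0 + t)‖ ≤ w * su :=
          mul_le_mul_of_nonneg_left (hsut (K0 + t)) hw0
        have h5 : c * (θ * D 0 * ρ ^ t) ≤ θ * D 0 * ρ ^ (t+1) := by
          have hnn : 0 ≤ θ * D 0 * ρ ^ t :=
            mul_nonneg (mul_nonneg hθ0 (hD0 0)) (pow_nonneg hρ0.le t)
          have : c * (θ * D 0 * ρ ^ t) ≤ ρ * (θ * D 0 * ρ ^ t) :=
            mul_le_mul_of_nonneg_right (by linarith) hnn
          calc c * (θ * D 0 * ρ ^ t) ≤ ρ * (θ * D 0 * ρ ^ t) := this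
            _ = θ * D 0 * ρ ^ (t+1) := by rw [pow_succ]; ring
        have h6 : w * su ≤ w * S := mul_le_mul_of_nonneg_left hsuS hw0
        -- (1-c) Γ0 = w + 1, so c Γ0 S + w S + sb ≤ Γ0 S
        have h7 : c * (Γ 0 * S) + w * S + sb ≤ Γ 0 * S := by
          have h8 : Γ 0 * (1 - c) * S = (w + 1) * S := by rw [hΓ0inv]
          have h9 : Γ 0 * (1 - c) * S = Γ 0 * S - c * (Γ 0 * S) := by ring
          have h10 : (w + 1) * S = w * S + S := by ring
          linarith
        have hfin : c * ‖x (K0 + t) 0‖ + (w * ‖u (K0 + t)‖ + sb) ≤ θ * D 0 * ρ ^ (t+1) + Γ 0 * S := by linarith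
        exact hfin
    | succ i ihi =>
      intro hi t
      have hi' : i < M := Nat.lt_of_succ_lt hi
      have ihc := ihi hi'
      induction t with
      | zero =>
        rw [pow_zero]
        have h1 : ‖x (K0 + 0) (i+1)‖ ≤ θ := by rw [Nat.add_zero]; exact hbase (i+1) hi
        have h2 : 0 ≤ Γ (i+1) * S := mul_nonneg (hΓpos (i+1)).le hS0
        have h3 : θ * 1 ≤ θ * D (i+1) := mul_le_mul_of_nonneg_left (hD1 (i+1)) hθ0
        have h4 : θ * D (i+1) * 1 = θ * D (i+1) := by ring
        linarith
      | succ t iht =>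
        have heq : K0 + (t+1) = (K0 + t) + 1 := by omega
        rw [heq, hstepS (K0 + t) i hi]
        have h2 := hstepC (i+1) hi (x (K0 + t + 1) i) (x (K0 + t) (i+1))
          (hreg (K0 + t + 1) (by omega) i hi') (hreg (K0 + t) (by omega) (i+1) hi)
        refine h2.trans ?_
        have hxi : ‖x (K0 + t + 1) i‖ ≤ θ * D i * ρ ^ (t+1) + Γ i * S := by
          have := ihc (t+1)
          rwa [heq] at this
        have h3 : c * ‖x (K0 + t) (i+1)‖ ≤ c * (θ * D (i+1) * ρ ^ t + Γ (i+1) * S) :=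
          mul_le_mul_of_nonneg_left iht hc0.le
        have h4 : w * ‖x (K0 + t + 1) i‖ ≤ w * (θ * D i * ρ ^ (t+1) + Γ i * S) :=
          mul_le_mul_of_nonneg_left hxi hw0
        -- the θ-part
        have key : c * q + w * ρ ≤ q * ρ := by linarith [hqw]
        have hnn : 0 ≤ θ * D i * ρ ^ t :=
          mul_nonneg (mul_nonneg hθ0 (hD0 i)) (pow_nonneg hρ0.le t)
        have h5 : c * (θ * D (i+1) * ρ ^ t) + w * (θ * D i * ρ ^ (t+1)) ≤
            θ * D (i+1) * ρ ^ (t+1) := by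
          have e1 : c * (θ * D (i+1) * ρ ^ t) + w * (θ * D i * ρ ^ (t+1)) =
              (c * q + w * ρ) * (θ * D i * ρ ^ t) := by
            rw [hDsucc i, pow_succ]; ring
          have e2 : θ * D (i+1) * ρ ^ (t+1) = (q * ρ) * (θ * D i * ρ ^ t) := by
            rw [hDsucc i, pow_succ]; ring
          rw [e1, e2]
          exact mul_le_mul_of_nonneg_right key hnn
        -- the S-part
        have h7 : c * (Γ (i+1) * S) + w * (Γ i * S) + sb ≤ Γ (i+1) * S := by
          have h8 : Γ (i+1) * (1 - c) * S = (w * Γ i + 1) * S := by rw [hΓsinv i]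
          have h9 : Γ (i+1) * (1 - c) * S = Γ (i+1) * S - c * (Γ (i+1) * S) := by ring
          have h10 : (w * Γ i + 1) * S = w * (Γ i * S) + S := by ring
          linarith
        have hfin : c * ‖x (K0 + t) (i+1)‖ + (w * ‖x (K0 + t + 1) i‖ + sb) ≤ θ * D (i+1) * ρ ^ (t+1) + Γ (i+1) * S := by linarith
        exact hfin
  -- conclusion
  haveI : Nonempty (Fin M) := ⟨⟨0, hM⟩⟩
  refine ciSup_le fun iM => ?_
  obtain ⟨i, hi⟩ := iM
  show ‖x k i‖ ≤ B * ρ ^ k * s + G * su + G * sb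
  have hΓiS : Γ i * S ≤ G * su + G * sb := by
    have h1 : Γ i ≤ G := le_trans (hΓstar i hi) hΓG
    have h2 : Γ i * S ≤ G * S := mul_le_mul_of_nonneg_right h1 hS0
    have h3 : G * S = G * su + G * sb := by rw [hSdef]; ring
    linarith
  rcases le_or_gt s 1 with hs1 | hs1
  · -- small initial state: contraction from time 0
    have hreg : ∀ k, 0 ≤ k → ∀ j < M, ‖x k j‖ ≤ 1 + ε := by
      intro k _ j hj
      have h1 : ‖x k j‖ ≤ max (‖xbar j‖) 1 := hinv k j hj
      have h2 : ‖xbar j‖ ≤ 1 := (hsi j hj).trans hs1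
      have : max (‖xbar j‖) 1 ≤ 1 := max_le h2 le_rfl
      linarith
    have hbase : ∀ j < M, ‖x 0 j‖ ≤ s := by
      intro j hj; rw [hx0]; exact hsi j hj
    have hc2 := hcas 0 s hs0 hreg hbase i hi k
    rw [Nat.zero_add] at hc2
    have h1 : s * D i * ρ ^ k ≤ B * ρ ^ k * s := by
      have h2 : D i ≤ B := (hDstar i hi).trans hBD
      have h3 : s * D i ≤ s * B := mul_le_mul_of_nonneg_left h2 hs0
      have h4 : s * D i * ρ ^ k ≤ s * B * ρ ^ k :=
        mul_le_mul_of_nonneg_right h3 (pow_nonneg hρ0.le k)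
      linarith [h4, (by ring : s * B * ρ ^ k = B * ρ ^ k * s)]
    linarith [hc2, h1, hΓiS]
  · -- large initial state: phase 1 until time K, then contraction
    have hregK : ∀ k, K ≤ k → ∀ j < M, ‖x k j‖ ≤ 1 + ε := by
      intro k hKk j hj
      have h1 := hph1 k j hj
      have h2 : zb ^ k ≤ zb ^ K := pow_le_pow_of_le_one hzb0.le hzb1.le hKk
      have h3 : zb ^ k * (Λ - 1) ≤ zb ^ K * (Λ - 1) :=
        mul_le_mul_of_nonneg_right h2 (by linarith)
      have h4 : zb ^ K * (Λ - 1) ≤ zb ^ K * Λ :=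
        mul_le_mul_of_nonneg_left (by linarith) (pow_nonneg hzb0.le K)
      linarith
    have hbaseK : ∀ j < M, ‖x K j‖ ≤ 1 + ε := hregK K le_rfl
    rcases le_or_gt K k with hKk | hkK
    · obtain ⟨t, rfl⟩ := Nat.exists_eq_add_of_le hKk
      have hcK := hcas K (1 + ε) (by linarith) hregK hbaseK i hi t
      have h1 : (1 + ε) * D i * ρ ^ t ≤ B * ρ ^ (K + t) * s := by
        have e1 : B * ρ ^ (K + t) * s = (B * ρ ^ K) * (ρ ^ t * s) := by
          rw [pow_add]; ring
        have h2 : (1 + ε) * D i ≤ (1 + ε) * Dstar :=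
          mul_le_mul_of_nonneg_left (hDstar i hi) (by linarith)
        have h3 : (1 + ε) * Dstar ≤ B * ρ ^ K := by rw [hBK]; exact le_max_left _ _
        have h4 : (1 + ε) * D i * ρ ^ t ≤ (B * ρ ^ K) * ρ ^ t := by
          have := ((h2.trans h3)).trans_eq (rfl : B * ρ ^ K = B * ρ ^ K)
          exact mul_le_mul_of_nonneg_right (h2.trans h3) (pow_nonneg hρ0.le t)
        have h5 : (B * ρ ^ K) * ρ ^ t ≤ (B * ρ ^ K) * (ρ ^ t * s) := by
          have hBρ : 0 ≤ (B * ρ ^ K) * ρ ^ t :=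
            mul_nonneg (mul_nonneg hB0.le (pow_nonneg hρ0.le K)) (pow_nonneg hρ0.le t)
          have h6 := mul_le_mul_of_nonneg_left (show (1:ℝ) ≤ s from hs1.le) hBρ
          calc (B * ρ ^ K) * ρ ^ t = ((B * ρ ^ K) * ρ ^ t) * 1 := by ring
            _ ≤ ((B * ρ ^ K) * ρ ^ t) * s := h6
            _ = (B * ρ ^ K) * (ρ ^ t * s) := by ring
        rw [e1]
        exact h4.trans h5
      linarith [hcK, h1, hΓiS]
    · have h1 : ‖x k i‖ ≤ Λ := hinvΛ k i hi
      have h2 : Λ ≤ B * ρ ^ k * s := by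
        have h3 : Λ ≤ B * ρ ^ K := by rw [hBK]; exact le_max_right _ _
        have h4 : ρ ^ K ≤ ρ ^ k := pow_le_pow_of_le_one hρ0.le hρ1.le hkK.le
        have h5 : B * ρ ^ K ≤ B * ρ ^ k := mul_le_mul_of_nonneg_left h4 hB0.le
        have h6 : B * ρ ^ k ≤ B * ρ ^ k * s := by
          have hBρ : 0 ≤ B * ρ ^ k := mul_nonneg hB0.le (pow_nonneg hρ0.le k)
          have h8 := mul_le_mul_of_nonneg_left (show (1:ℝ) ≤ s from hs1.le) hBρ
          calc B * ρ ^ k = (B * ρ ^ k) * 1 := by ring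
            _ ≤ (B * ρ ^ k) * s := h8
        linarith
      have h7 : 0 ≤ G * su + G * sb := by positivity
      linarith
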